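/- Let q > 2 be a prime power. There is no invertible (q+1)×(q+1) matrix M over the finite field F_q such that every (q−1)×(q−1) submatrix of M (obtained by selecting any q−1 rows and any q−1 columns) is invertible; that is, there is no linear (q−1, q+1, q)-AONT. -/

import Mathlib

open Matrix Finset

private lemma aont_sum_univ_zero (F : Type*) [Field F] [Fintype F]
    (h : 2 < Fintype.card F) : ∑ x : F, x = 0 := by
  have := FiniteField.sum_pow_lt_card_sub_one (K := F) 1 (by omega)
  simpa using this

/-- For any prime power q > 2 there is no linear (q−1,q+1,q)-AONT: no invertible
(q+1)×(q+1) matrix over F_q all of whose (q−1)×(q−1) submatrices are invertible. -/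
theorem no_linear_q_sub_one_q_add_one_q_AONT
    (q : ℕ) (hq : IsPrimePow q) (hq2 : 2 < q)
    (F : Type*) [Field F] [Fintype F] (hF : Fintype.card F = q) :
    ¬ ∃ M : Matrix (Fin (q + 1)) (Fin (q + 1)) F,
        M.det ≠ 0 ∧
        ∀ r c : Fin (q - 1) → Fin (q + 1),
          Function.Injective r → Function.Injective c →
          (M.submatrix r c).det ≠ 0 := by
  rintro ⟨M, hMdet, hsub⟩
  set N : Matrix (Fin (q+1)) (Fin (q+1)) F := M⁻¹ with hN
  have hNM : N * M = 1 := Matrix.nonsing_inv_mul M (Ne.isUnit hMdet)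
  have hNdet : N.det ≠ 0 := by
    rw [hN, Matrix.det_nonsing_inv]
    simpa [Ring.inverse_eq_inv'] using inv_ne_zero hMdet
  -- Key: every 2×2 minor of N is nonzero
  have key : ∀ i k j l : Fin (q+1), i ≠ k → j ≠ l →
      N i j * N k l - N i l * N k j ≠ 0 := by
    intro i k j l hik hjl h0
    -- singular 2×2 submatrix of N gives a vector
    have hP : (Matrix.of ![![N i j, N i l], ![N k j, N k l]]).det = 0 := by
      rw [Matrix.det_fin_two]
      simpa using h0
    obtain ⟨w, hw, hwP⟩ := Matrix.exists_vecMul_eq_zero_iff.mpr hP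
    set v : Fin (q+1) → F := fun c => w 0 * N i c + w 1 * N k c with hvdef
    have hvj : v j = 0 := by
      have := congrFun hwP 0
      simpa [Matrix.vecMul, dotProduct, Fin.sum_univ_two, hvdef] using this
    have hvl : v l = 0 := by
      have := congrFun hwP 1
      simpa [Matrix.vecMul, dotProduct, Fin.sum_univ_two, hvdef] using this
    -- v ᵥ* M is supported on {i,k}
    have hvM : ∀ c, (v ᵥ* M) c
        = (if c = i then w 0 else 0) + (if c = k then w 1 else 0) := by
      intro c
      have h1 : (v ᵥ* M) c = w 0 * (N * M) i c + w 1 * (N * M) k c := by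
        simp only [Matrix.vecMul, dotProduct, hvdef, Matrix.mul_apply]
        rw [Finset.mul_sum, Finset.mul_sum, ← Finset.sum_add_distrib]
        congr 1; ext r; ring
      rw [h1, hNM]
      by_cases h2 : c = i
      · subst h2
        rw [Matrix.one_apply_eq, Matrix.one_apply_ne (Ne.symm hik), if_pos rfl, if_neg hik]
        ring
      · by_cases h3 : c = k
        · subst h3
          rw [Matrix.one_apply_eq, Matrix.one_apply_ne hik, if_neg h2, if_pos rfl]
          ring
        · rw [Matrix.one_apply_ne (fun h => h2 h.symm),
            Matrix.one_apply_ne (fun h => h3 h.symm), if_neg h2, if_neg h3]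
          ring
    have hv0 : v ≠ 0 := by
      intro hv
      apply hw
      have h0' : ∀ c, (v ᵥ* M) c = 0 := by simp [hv]
      have hwi := (hvM i).symm.trans (h0' i)
      have hwk := (hvM k).symm.trans (h0' k)
      simp [hik, Ne.symm hik] at hwi hwk
      funext t
      fin_cases t <;> simp [hwi, hwk]
    -- build the (q-1)×(q-1) submatrix of M with rows ∉ {j,l}, cols ∉ {i,k}
    set sr : Finset (Fin (q+1)) := {j, l}ᶜ with hsr
    set sc : Finset (Fin (q+1)) := {i, k}ᶜ with hsc
    have hsrcard : sr.card = q - 1 := by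
      rw [hsr, Finset.card_compl,
        Finset.card_insert_of_notMem (by simpa using hjl), Finset.card_singleton]
      simp
    have hsccard : sc.card = q - 1 := by
      rw [hsc, Finset.card_compl,
        Finset.card_insert_of_notMem (by simpa using hik), Finset.card_singleton]
      simp
    set er : Fin (q-1) ≃ sr := (sr.equivFin.trans (finCongr hsrcard)).symm with her
    set ec : Fin (q-1) ≃ sc := (sc.equivFin.trans (finCongr hsccard)).symm with hec
    set rf : Fin (q-1) → Fin (q+1) := fun t => (er t : Fin (q+1)) with hrf
    set cf : Fin (q-1) → Fin (q+1) := fun t => (ec t : Fin (q+1)) with hcf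
    have hrinj : Function.Injective rf := fun a b hab =>
      er.injective (Subtype.ext hab)
    have hcinj : Function.Injective cf := fun a b hab =>
      ec.injective (Subtype.ext hab)
    apply hsub rf cf hrinj hcinj
    rw [← Matrix.exists_vecMul_eq_zero_iff]
    refine ⟨fun t => v (rf t), ?_, ?_⟩
    · -- nonzero
      obtain ⟨x, hx⟩ := Function.ne_iff.mp hv0
      have hxmem : x ∈ sr := by
        rw [hsr, Finset.mem_compl, Finset.mem_insert, Finset.mem_singleton]
        rintro (rfl | rfl)
        · exact hx (by simpa using hvj)
        · exact hx (by simpa using hvl)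
      intro hcontra
      have := congrFun hcontra (er.symm ⟨x, hxmem⟩)
      simp only [hrf, Equiv.apply_symm_apply, Pi.zero_apply] at this
      exact hx (by simpa using this)
    · funext c'
      have hsum : ∑ t : Fin (q-1), v (rf t) * M (rf t) (cf c')
          = ∑ r : Fin (q+1), v r * M r (cf c') := by
        have e1 : ∑ t : Fin (q-1), v (rf t) * M (rf t) (cf c')
            = ∑ x : sr, v (x : Fin (q+1)) * M (x : Fin (q+1)) (cf c') :=
          Equiv.sum_comp er (fun x : sr => v (x : Fin (q+1)) * M (x : Fin (q+1)) (cf c'))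
        rw [e1, Finset.sum_coe_sort sr (fun x => v x * M x (cf c'))]
        refine Finset.sum_subset (Finset.subset_univ sr) ?_
        intro x _ hxns
        rw [hsr, Finset.mem_compl, not_not, Finset.mem_insert, Finset.mem_singleton] at hxns
        rcases hxns with rfl | rfl
        · rw [hvj, zero_mul]
        · rw [hvl, zero_mul]
      have hcc : (cf c' : Fin (q+1)) ∈ sc := (ec c').2
      rw [hsc, Finset.mem_compl, Finset.mem_insert, Finset.mem_singleton] at hcc
      push_neg at hcc
      have : (v ᵥ* M) (cf c') = 0 := by
        rw [hvM]
        simp [hcc.1, hcc.2]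
      simp only [Matrix.vecMul, dotProduct] at this
      simp only [Matrix.vecMul, Matrix.submatrix_apply, dotProduct, Pi.zero_apply]
      rw [hsum]
      exact this
  -- column: at most one zero per column
  have colzero : ∀ (j : Fin (q+1)) (i k : Fin (q+1)), i ≠ k →
      N i j = 0 → N k j = 0 → False := by
    intro j i k hik hi hk
    obtain ⟨l, hl⟩ := Fintype.exists_ne_of_one_lt_card (α := Fin (q+1)) (by rw [Fintype.card_fin]; omega) j
    exact key i k j l hik (Ne.symm hl) (by rw [hi, hk]; ring)
  -- row 0 has a zero
  have i0 : Fin (q+1) := 0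
  obtain ⟨j₀, hj₀⟩ : ∃ j₀, N (0 : Fin (q+1)) j₀ = 0 := by
    by_contra hrow
    push_neg at hrow
    obtain ⟨k, hk⟩ := Fintype.exists_ne_of_one_lt_card (α := Fin (q+1)) (by rw [Fintype.card_fin]; omega)
      (0 : Fin (q+1))
    set g : Fin (q+1) → F := fun j => N k j * (N 0 j)⁻¹ with hg
    have hginj : Function.Injective g := by
      intro j l hjl'
      by_contra hne
      apply key (0 : Fin (q+1)) k j l (Ne.symm hk) hne
      have h1 := hrow j
      have h2 := hrow l
      simp only [hg] at hjl'
      rw [← div_eq_mul_inv, ← div_eq_mul_inv, div_eq_div_iff h1 h2] at hjl'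
      rw [sub_eq_zero]
      rw [mul_comm (N 0 j) (N k l), ← hjl']
      ring
    have := Fintype.card_le_of_injective g hginj
    rw [hF, Fintype.card_fin] at this
    omega
  have hcolnz : ∀ i : Fin (q+1), i ≠ 0 → N i j₀ ≠ 0 := by
    intro i hi hzero
    exact colzero j₀ i 0 hi hzero hj₀
  -- the dependence vector
  set v : Fin (q+1) → F := fun i => if i = 0 then 0 else (N i j₀)⁻¹ with hv
  have hvne : v ≠ 0 := by
    obtain ⟨k, hk⟩ := Fintype.exists_ne_of_one_lt_card (α := Fin (q+1)) (by rw [Fintype.card_fin]; omega)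
      (0 : Fin (q+1))
    intro hcontra
    have := congrFun hcontra k
    simp only [hv, Pi.zero_apply, if_neg hk] at this
    exact hcolnz k hk (by simpa using inv_eq_zero.mp this)
  have hdep : v ᵥ* N = 0 := by
    funext c
    simp only [Matrix.vecMul, dotProduct, Pi.zero_apply]
    have hsplit : ∑ i : Fin (q+1), v i * N i c
        = ∑ i ∈ Finset.univ.erase (0 : Fin (q+1)), (N i j₀)⁻¹ * N i c := by
      rw [← Finset.sum_erase_add _ _ (Finset.mem_univ (0 : Fin (q+1)))]
      have : v 0 * N 0 c = 0 := by simp [hv]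
      rw [this, add_zero]
      refine Finset.sum_congr rfl ?_
      intro i hi
      rw [Finset.mem_erase] at hi
      simp [hv, hi.1]
    rw [hsplit]
    have hsubty : ∑ i ∈ Finset.univ.erase (0 : Fin (q+1)), (N i j₀)⁻¹ * N i c
        = ∑ i : {i : Fin (q+1) // i ≠ 0}, (N (i : Fin (q+1)) j₀)⁻¹ * N (i : Fin (q+1)) c := by
      exact Finset.sum_subtype (Finset.univ.erase (0 : Fin (q+1)))
        (fun x => by simp [Finset.mem_erase]) (fun i => (N i j₀)⁻¹ * N i c)
    rw [hsubty]
    by_cases hc : c = j₀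
    · subst hc
      have hone : ∀ i : {i : Fin (q+1) // i ≠ 0},
          (N (i : Fin (q+1)) c)⁻¹ * N (i : Fin (q+1)) c = 1 := fun i =>
        inv_mul_cancel₀ (hcolnz i i.2)
      rw [Finset.sum_congr rfl (fun i _ => hone i), Finset.sum_const]
      have hcard : Fintype.card {i : Fin (q+1) // i ≠ 0} = q := by
        simp [Fintype.card_subtype_compl]
      rw [Finset.card_univ, hcard]
      have : ((q : ℕ) : F) = 0 := by
        have := FiniteField.cast_card_eq_zero (K := F)
        rwa [hF] at this
      simpa using this
    · -- g is a bijection onto F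
      set g : {i : Fin (q+1) // i ≠ 0} → F :=
        fun i => (N (i : Fin (q+1)) j₀)⁻¹ * N (i : Fin (q+1)) c with hg
      have hginj : Function.Injective g := by
        rintro ⟨i, hi⟩ ⟨k, hk⟩ hik'
        by_contra hne
        have hne' : i ≠ k := fun h => hne (Subtype.ext h)
        apply key i k j₀ c hne' (Ne.symm hc)
        have h1 := hcolnz i hi
        have h2 := hcolnz k hk
        simp only [hg] at hik'
        rw [inv_mul_eq_div, inv_mul_eq_div, div_eq_div_iff h1 h2] at hik'
        rw [sub_eq_zero]
        rw [hik']
        ring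
      have hcard : Fintype.card {i : Fin (q+1) // i ≠ 0} = Fintype.card F := by
        simp [Fintype.card_subtype_compl, hF]
      have hgbij : Function.Bijective g :=
        (Fintype.bijective_iff_injective_and_card g).mpr ⟨hginj, hcard⟩
      have hsum2 : ∑ i : {i : Fin (q+1) // i ≠ 0}, g i = ∑ x : F, x :=
        Fintype.sum_bijective g hgbij _ _ (fun i => rfl)
      exact hsum2.trans (aont_sum_univ_zero F (by omega))
  exact hNdet (Matrix.exists_vecMul_eq_zero_iff.mp ⟨v, hvne, hdep⟩)
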